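/- Let f : ℂ → ℂ be continuous on the closed unit disk D̄ and holomorphic (complex differentiable) on the open unit disk. Then for every φ ∈ H² the product f·φ again lies in H² (hence T(f)φ = f·φ), and T(f) commutes with T(ζ): T(f)∘T(ζ) = T(ζ)∘T(f). -/

import Mathlib

open MeasureTheory Metric InnerProductSpace

noncomputable section

/-- The rotation-invariant probability measure on the circle `|ζ| = q^{m/2}`. -/
def nu (q : ℝ) (m : ℕ) : Measure ℂ :=
  Measure.map (fun θ : ℝ => ((Real.sqrt q ^ m : ℝ) : ℂ) * Complex.exp (Complex.I * θ))
    ((ENNReal.ofReal (2 * Real.pi)⁻¹) • volume.restrict (Set.Ico 0 (2 * Real.pi)))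

/-- The measure `μ = Σ_m q^m (∏_{i≥0}(1−q^{m+i+1})) ν_m` on `ℂ`. -/
def mu (q : ℝ) : Measure ℂ :=
  Measure.sum fun m : ℕ =>
    (ENNReal.ofReal (q ^ m * ∏' i : ℕ, (1 - q ^ (m + i + 1)))) • nu q m

/-- `H²` : the closed linear span in `L²(ℂ, μ)` of the (classes of the) monomials `ζ ↦ ζⁿ`. -/
def Hsq (q : ℝ) : Submodule ℂ (Lp ℂ 2 (mu q)) :=
  (Submodule.span ℂ {φ : Lp ℂ 2 (mu q) |
      ∃ n : ℕ, (φ : ℂ → ℂ) =ᵐ[mu q] fun ζ => ζ ^ n}).topologicalClosure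

theorem mu_ae_le_one (q : ℝ) (hq1 : q ≤ 1) : ∀ᵐ ζ ∂(mu q), ‖ζ‖ ≤ 1 := by
  have hmeas : MeasurableSet {ζ : ℂ | ¬ ‖ζ‖ ≤ 1} := by
    have : IsOpen {ζ : ℂ | 1 < ‖ζ‖} := isOpen_lt continuous_const continuous_norm
    simpa [not_le] using this.measurableSet
  rw [ae_iff, mu, Measure.sum_apply _ hmeas]
  have hzero : ∀ m : ℕ, nu q m {ζ : ℂ | ¬ ‖ζ‖ ≤ 1} = 0 := by
    intro m
    have hcont : Continuous (fun θ : ℝ => ((Real.sqrt q ^ m : ℝ) : ℂ) * Complex.exp (Complex.I * θ)) :=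
      continuous_const.mul (Complex.continuous_exp.comp (continuous_const.mul Complex.continuous_ofReal))
    rw [nu, Measure.map_apply hcont.measurable hmeas]
    have : (fun θ : ℝ => ((Real.sqrt q ^ m : ℝ) : ℂ) * Complex.exp (Complex.I * θ)) ⁻¹' {ζ : ℂ | ¬ ‖ζ‖ ≤ 1} = ∅ := by
      ext θ
      simp only [Set.mem_preimage, Set.mem_setOf_eq, Set.mem_empty_iff_false, iff_false, not_not]
      have h1 : ‖Complex.exp (Complex.I * θ)‖ = 1 := by
        rw [Complex.norm_exp]
        simp [Complex.mul_re]
      rw [norm_mul, h1, mul_one]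
      have : ‖((Real.sqrt q ^ m : ℝ) : ℂ)‖ = Real.sqrt q ^ m := by
        rw [Complex.norm_real, Real.norm_eq_abs, abs_of_nonneg (pow_nonneg (Real.sqrt_nonneg q) m)]
      rw [this]
      exact pow_le_one₀ (Real.sqrt_nonneg q) (Real.sqrt_le_one.mpr hq1)
    rw [this]
    simp
  rw [ENNReal.tsum_eq_zero]
  intro m
  rw [Measure.smul_apply, hzero m, smul_zero]

section Mul
variable {μ : Measure ℂ}

theorem memLp_mul (g : ℂ → ℂ) (hgm : AEStronglyMeasurable g μ) (C : ℝ)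
    (hgb : ∀ᵐ ζ ∂μ, ‖g ζ‖ ≤ C) (φ : Lp ℂ 2 μ) :
    MemLp (fun ζ => g ζ * φ ζ) 2 μ := by
  refine (Lp.memLp φ).of_le_mul (c := C) (hgm.mul (Lp.memLp φ).1) ?_
  filter_upwards [hgb] with ζ h
  rw [norm_mul]
  exact mul_le_mul_of_nonneg_right h (norm_nonneg _)

/-- multiplication by a bounded a.e.-strongly-measurable function, as a CLM on `L²`. -/
def mulCLM (g : ℂ → ℂ) (hgm : AEStronglyMeasurable g μ) (C : ℝ) (hC : 0 ≤ C)
    (hgb : ∀ᵐ ζ ∂μ, ‖g ζ‖ ≤ C) : Lp ℂ 2 μ →L[ℂ] Lp ℂ 2 μ := by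
  refine LinearMap.mkContinuous
    { toFun := fun φ => (memLp_mul g hgm C hgb φ).toLp _
      map_add' := ?_
      map_smul' := ?_ } C ?_
  · intro φ ψ
    apply Lp.ext
    filter_upwards [MemLp.coeFn_toLp (memLp_mul g hgm C hgb (φ + ψ)),
      MemLp.coeFn_toLp (memLp_mul g hgm C hgb φ),
      MemLp.coeFn_toLp (memLp_mul g hgm C hgb ψ),
      Lp.coeFn_add φ ψ,
      Lp.coeFn_add ((memLp_mul g hgm C hgb φ).toLp _) ((memLp_mul g hgm C hgb ψ).toLp _)]
      with ζ h1 h2 h3 h4 h5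
    rw [h1, h5, Pi.add_apply, h2, h3, h4, Pi.add_apply, mul_add]
  · intro c φ
    simp only [RingHom.id_apply]
    apply Lp.ext
    filter_upwards [MemLp.coeFn_toLp (memLp_mul g hgm C hgb (c • φ)),
      MemLp.coeFn_toLp (memLp_mul g hgm C hgb φ),
      Lp.coeFn_smul c φ,
      Lp.coeFn_smul c ((memLp_mul g hgm C hgb φ).toLp _)] with ζ h1 h2 h3 h4
    rw [h1, h4, Pi.smul_apply, h2, h3, Pi.smul_apply, smul_eq_mul, smul_eq_mul]
    ring
  · intro φ
    show ‖(memLp_mul g hgm C hgb φ).toLp _‖ ≤ C * ‖φ‖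
    rw [Lp.norm_toLp]
    have hb : eLpNorm (fun ζ => g ζ * φ ζ) 2 μ ≤ ENNReal.ofReal C * eLpNorm (⇑φ) 2 μ := by
      refine eLpNorm_le_mul_eLpNorm_of_ae_le_mul ?_ 2
      filter_upwards [hgb] with ζ h
      rw [norm_mul]
      exact mul_le_mul_of_nonneg_right h (norm_nonneg _)
    calc (eLpNorm (fun ζ => g ζ * φ ζ) 2 μ).toReal
        ≤ (ENNReal.ofReal C * eLpNorm (⇑φ) 2 μ).toReal := by
          refine ENNReal.toReal_mono ?_ hb
          exact ENNReal.mul_ne_top ENNReal.ofReal_ne_top (Lp.eLpNorm_ne_top φ)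
      _ = C * ‖φ‖ := by
          rw [ENNReal.toReal_mul, ENNReal.toReal_ofReal hC, Lp.norm_def]

theorem mulCLM_coeFn (g : ℂ → ℂ) (hgm : AEStronglyMeasurable g μ) (C : ℝ) (hC : 0 ≤ C)
    (hgb : ∀ᵐ ζ ∂μ, ‖g ζ‖ ≤ C) (φ : Lp ℂ 2 μ) :
    ⇑(mulCLM g hgm C hC hgb φ) =ᵐ[μ] fun ζ => g ζ * φ ζ :=
  MemLp.coeFn_toLp (memLp_mul g hgm C hgb φ)

end Mul

section Mon
variable (q : ℝ)

theorem mon_meas (k : ℕ) : AEStronglyMeasurable (fun ζ : ℂ => ζ ^ k) (mu q) :=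
  (continuous_pow k).aestronglyMeasurable

theorem mon_bdd (hq1 : q ≤ 1) (k : ℕ) : ∀ᵐ ζ ∂(mu q), ‖ζ ^ k‖ ≤ 1 := by
  filter_upwards [mu_ae_le_one q hq1] with ζ h
  rw [norm_pow]
  exact pow_le_one₀ (norm_nonneg _) h

/-- multiplication by `ζ^k` preserves `Hsq`. -/
theorem mon_mul_mem (hq1 : q ≤ 1) (k : ℕ) (φ : Lp ℂ 2 (mu q)) (hφ : φ ∈ Hsq q) :
    mulCLM (fun ζ : ℂ => ζ ^ k) (mon_meas q k) 1 zero_le_one (mon_bdd q hq1 k) φ ∈ Hsq q := by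
  set M := mulCLM (fun ζ : ℂ => ζ ^ k) (mon_meas q k) 1 zero_le_one (mon_bdd q hq1 k) with hM
  set S := {φ : Lp ℂ 2 (mu q) | ∃ n : ℕ, (φ : ℂ → ℂ) =ᵐ[mu q] fun ζ => ζ ^ n} with hS
  have hspan : ∀ ψ ∈ Submodule.span ℂ S, M ψ ∈ Hsq q := by
    intro ψ hψ
    induction hψ using Submodule.span_induction with
    | mem x hx =>
      obtain ⟨n, hn⟩ := hx
      refine Submodule.le_topologicalClosure _ (Submodule.subset_span ?_)
      refine ⟨k + n, ?_⟩
      filter_upwards [mulCLM_coeFn (fun ζ : ℂ => ζ ^ k) (mon_meas q k) 1 zero_le_one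
        (mon_bdd q hq1 k) x, hn] with ζ h1 h2
      rw [h1, h2, ← pow_add]
    | zero => rw [map_zero]; exact zero_mem _
    | add x y _ _ hx hy => rw [map_add]; exact add_mem hx hy
    | smul c x _ hx => rw [_root_.map_smul]; exact Submodule.smul_mem _ _ hx
  have hcl : M '' closure (Submodule.span ℂ S : Set (Lp ℂ 2 (mu q))) ⊆ Hsq q := by
    refine (image_closure_subset_closure_image M.continuous).trans ?_
    have h1 : M '' (Submodule.span ℂ S : Set (Lp ℂ 2 (mu q))) ⊆ (Hsq q : Set (Lp ℂ 2 (mu q))) := by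
      rintro _ ⟨x, hx, rfl⟩
      exact hspan x hx
    calc closure (M '' (Submodule.span ℂ S : Set (Lp ℂ 2 (mu q))))
        ⊆ closure (Hsq q : Set (Lp ℂ 2 (mu q))) := closure_mono h1
      _ = (Hsq q : Set (Lp ℂ 2 (mu q))) := (Submodule.isClosed_topologicalClosure _).closure_eq
  exact hcl ⟨φ, hφ, rfl⟩

theorem poly_mul_mem (hq1 : q ≤ 1) (c : ℕ → ℂ) (n : ℕ)
    (φ : Lp ℂ 2 (mu q)) (hφ : φ ∈ Hsq q)
    (h : MemLp (fun ζ => (∑ k ∈ Finset.range n, c k * ζ ^ k) * φ ζ) 2 (mu q)) :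
    h.toLp _ ∈ Hsq q := by
  induction n with
  | zero =>
    have : h.toLp _ = (0 : Lp ℂ 2 (mu q)) := by
      apply Lp.ext
      filter_upwards [MemLp.coeFn_toLp h, Lp.coeFn_zero (E := ℂ) (p := 2) (μ := mu q)]
        with ζ h1 h2
      rw [h1, h2]
      simp
    rw [this]
    exact zero_mem _
  | succ n ih =>
    have hk : MemLp (fun ζ : ℂ => ζ ^ n * φ ζ) 2 (mu q) :=
      memLp_mul _ (mon_meas q n) 1 (mon_bdd q hq1 n) φ
    have hsub : MemLp (fun ζ => (∑ k ∈ Finset.range n, c k * ζ ^ k) * φ ζ) 2 (mu q) := by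
      have h2 := h.sub (hk.const_smul (c n))
      have heq : ((fun ζ => (∑ k ∈ Finset.range (n + 1), c k * ζ ^ k) * φ ζ)
          - c n • (fun ζ : ℂ => ζ ^ n * φ ζ))
          = fun ζ => (∑ k ∈ Finset.range n, c k * ζ ^ k) * φ ζ := by
        funext ζ
        simp only [Pi.sub_apply, Pi.smul_apply, smul_eq_mul, Finset.sum_range_succ]
        ring
      rwa [heq] at h2
    have hkmem : hk.toLp _ ∈ Hsq q := by
      have hMk := mon_mul_mem q hq1 n φ hφ
      have : hk.toLp _ = mulCLM (fun ζ : ℂ => ζ ^ n) (mon_meas q n) 1 zero_le_one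
          (mon_bdd q hq1 n) φ := by
        apply Lp.ext
        filter_upwards [MemLp.coeFn_toLp hk, mulCLM_coeFn (fun ζ : ℂ => ζ ^ n) (mon_meas q n) 1
          zero_le_one (mon_bdd q hq1 n) φ] with ζ h1 h2
        rw [h1, h2]
      rw [this]
      exact hMk
    have : h.toLp _ = hsub.toLp _ + c n • hk.toLp _ := by
      apply Lp.ext
      filter_upwards [MemLp.coeFn_toLp h, MemLp.coeFn_toLp hsub, MemLp.coeFn_toLp hk,
        Lp.coeFn_add (hsub.toLp _) (c n • hk.toLp _), Lp.coeFn_smul (c n) (hk.toLp _)]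
        with ζ h1 h2 h3 h4 h5
      rw [h1, h4, Pi.add_apply, h2, h5, Pi.smul_apply, h3, smul_eq_mul, Finset.sum_range_succ]
      ring
    rw [this]
    exact add_mem (ih hsub) (Submodule.smul_mem _ _ hkmem)

end Mon

theorem approx_poly (f : ℂ → ℂ) (hfc : ContinuousOn f (closedBall 0 1))
    (hfh : DifferentiableOn ℂ f (ball 0 1)) :
    ∀ ε > (0 : ℝ), ∃ (n : ℕ) (c : ℕ → ℂ), ∀ z ∈ closedBall (0 : ℂ) 1,
      ‖f z - ∑ k ∈ Finset.range n, c k * z ^ k‖ ≤ ε := by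
  intro ε hε
  have huc : UniformContinuousOn f (closedBall 0 1) :=
    (isCompact_closedBall (0 : ℂ) 1).uniformContinuousOn_of_continuous hfc
  rw [Metric.uniformContinuousOn_iff] at huc
  obtain ⟨δ, hδ0, hδ⟩ := huc (ε / 2) (by linarith)
  set r : ℝ := max (1 / 2) (1 - δ / 2) with hrdef
  have hr0 : 0 < r := lt_of_lt_of_le (by norm_num) (le_max_left _ _)
  have hr1 : r < 1 := by
    apply max_lt (by norm_num) (by linarith)
  have hrδ : 1 - r < δ := by
    have : 1 - δ / 2 ≤ r := le_max_right _ _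
    linarith
  set g : ℂ → ℂ := fun z => f ((r : ℂ) * z) with hgdef
  have hinv : 1 < r⁻¹ := (one_lt_inv₀ hr0).mpr hr1
  set R₀ : ℝ := (1 + r⁻¹) / 2 with hR₀def
  have hR₀1 : 1 < R₀ := by rw [hR₀def]; linarith
  have hR₀r : R₀ < r⁻¹ := by rw [hR₀def]; linarith
  set R : NNReal := ⟨R₀, by positivity⟩ with hRdef
  have hgd : DifferentiableOn ℂ g (closedBall 0 R) := by
    have hmaps : Set.MapsTo (fun z : ℂ => (r : ℂ) * z) (closedBall 0 R) (ball 0 1) := by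
      intro z hz
      simp only [mem_closedBall, mem_ball, dist_zero_right] at hz ⊢
      rw [norm_mul, Complex.norm_real, Real.norm_eq_abs, abs_of_pos hr0]
      calc r * ‖z‖ ≤ r * R₀ := by
            apply mul_le_mul_of_nonneg_left hz hr0.le
        _ < r * r⁻¹ := by exact mul_lt_mul_of_pos_left hR₀r hr0
        _ = 1 := mul_inv_cancel₀ hr0.ne'
    exact hfh.comp ((differentiable_const _).mul differentiable_id).differentiableOn hmaps
  have hR : 0 < R := by
    rw [← NNReal.coe_lt_coe]
    show (0 : ℝ) < R₀
    positivity
  have hps := hgd.hasFPowerSeriesOnBall hR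
  set p := cauchyPowerSeries g 0 R with hpdef
  set r' : NNReal := ⟨(1 + R₀) / 2, by positivity⟩ with hr'def
  have hr'1 : (1 : ℝ) < r' := by show (1:ℝ) < (1 + R₀)/2; linarith
  have hr'R : (r' : ENNReal) < R := by
    rw [ENNReal.coe_lt_coe, ← NNReal.coe_lt_coe]
    show ((1 + R₀) / 2 : ℝ) < R₀
    linarith
  have htu := hps.tendstoUniformlyOn hr'R
  rw [Metric.tendstoUniformlyOn_iff] at htu
  obtain ⟨N, hN⟩ := (htu (ε / 2) (by linarith)).exists
  refine ⟨N, fun k => p k (fun _ => 1), fun z hz => ?_⟩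
  have hzr' : z ∈ ball (0 : ℂ) r' := by
    simp only [mem_closedBall, dist_zero_right] at hz
    simp only [mem_ball, dist_zero_right]
    exact lt_of_le_of_lt hz hr'1
  have h2 := hN z hzr'
  have hpoly : p.partialSum N z = ∑ k ∈ Finset.range N, p k (fun _ => 1) * z ^ k := by
    rw [FormalMultilinearSeries.partialSum]
    refine Finset.sum_congr rfl fun k _ => ?_
    have : (fun _ : Fin k => z) = fun i : Fin k => z • (1 : ℂ) := by
      funext i; simp
    rw [this, (p k).map_smul_univ]
    simp [Finset.prod_const, smul_eq_mul, mul_comm]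
  have hfz : dist (f z) (g z) ≤ ε / 2 := by
    rcases eq_or_ne z 0 with rfl | hz0
    · simp only [hgdef, mul_zero]
      simp only [dist_self]
      linarith
    · apply le_of_lt
      apply hδ z hz ((r : ℂ) * z) ?_ ?_
      · simp only [mem_closedBall, dist_zero_right] at hz ⊢
        rw [norm_mul, Complex.norm_real, Real.norm_eq_abs, abs_of_pos hr0]
        calc r * ‖z‖ ≤ 1 * 1 := by
              apply mul_le_mul hr1.le hz (norm_nonneg _) zero_le_one
          _ = 1 := one_mul 1
      · rw [dist_eq_norm]
        have : z - (r : ℂ) * z = ((1 - r : ℝ) : ℂ) * z := by push_cast; ring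
        rw [this, norm_mul, Complex.norm_real, Real.norm_eq_abs, abs_of_pos (by linarith)]
        simp only [mem_closedBall, dist_zero_right] at hz
        calc (1 - r) * ‖z‖ ≤ (1 - r) * 1 := by
              apply mul_le_mul_of_nonneg_left hz (by linarith)
          _ = 1 - r := mul_one _
          _ < δ := hrδ
  calc ‖f z - ∑ k ∈ Finset.range N, p k (fun _ => 1) * z ^ k‖
      = ‖(f z - g z) + (g z - p.partialSum N z)‖ := by rw [← hpoly]; ring_nf
    _ ≤ ‖f z - g z‖ + ‖g z - p.partialSum N z‖ := norm_add_le _ _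
    _ ≤ ε / 2 + ε / 2 := by
        apply add_le_add
        · rw [← dist_eq_norm]; exact hfz
        · rw [← dist_eq_norm]
          have h2' := h2
          rw [zero_add] at h2'
          exact h2'.le
    _ = ε := by ring

/-- if `f` is continuous on the closed disk and holomorphic inside, then `f·φ ∈ H²`. -/
theorem f_mul_mem (q : ℝ) (hq1 : q ≤ 1) (f : ℂ → ℂ)
    (hfc : ContinuousOn f (closedBall 0 1)) (hfh : DifferentiableOn ℂ f (ball 0 1))
    (φ : Lp ℂ 2 (mu q)) (hφ : φ ∈ Hsq q)
    (h : MemLp (fun ζ => f ζ * φ ζ) 2 (mu q)) : h.toLp _ ∈ Hsq q := by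
  have hclosed : IsClosed (Hsq q : Set (Lp ℂ 2 (mu q))) := by
    unfold Hsq
    exact Submodule.isClosed_topologicalClosure _
  have hmem : h.toLp _ ∈ closure (Hsq q : Set (Lp ℂ 2 (mu q))) := by
    rw [Metric.mem_closure_iff]
    intro ε hε
    have hφ1 : (0:ℝ) < ‖φ‖ + 1 := by positivity
    set ε' : ℝ := ε / (‖φ‖ + 1) with hε'def
    have hε' : 0 < ε' := div_pos hε hφ1
    obtain ⟨n, c, hc⟩ := approx_poly f hfc hfh ε' hε'
    set P : ℂ → ℂ := fun ζ => ∑ k ∈ Finset.range n, c k * ζ ^ k with hPdef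
    have hPm : AEStronglyMeasurable P (mu q) := by
      apply Continuous.aestronglyMeasurable
      exact continuous_finset_sum _ fun k _ => continuous_const.mul (continuous_pow k)
    have hPb : ∀ᵐ ζ ∂(mu q), ‖P ζ‖ ≤ ∑ k ∈ Finset.range n, ‖c k‖ := by
      filter_upwards [mu_ae_le_one q hq1] with ζ hζ
      calc ‖P ζ‖ ≤ ∑ k ∈ Finset.range n, ‖c k * ζ ^ k‖ := norm_sum_le _ _
        _ ≤ ∑ k ∈ Finset.range n, ‖c k‖ := by
            apply Finset.sum_le_sum
            intro k _
            rw [norm_mul, norm_pow]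
            calc ‖c k‖ * ‖ζ‖ ^ k ≤ ‖c k‖ * 1 := by
                  apply mul_le_mul_of_nonneg_left (pow_le_one₀ (norm_nonneg _) hζ) (norm_nonneg _)
              _ = ‖c k‖ := mul_one _
    have hP : MemLp (fun ζ => P ζ * φ ζ) 2 (mu q) := memLp_mul P hPm _ hPb φ
    refine ⟨hP.toLp _, poly_mul_mem q hq1 c n φ hφ hP, ?_⟩
    rw [Lp.dist_def]
    have hdist : eLpNorm (⇑(h.toLp _) - ⇑(hP.toLp _)) 2 (mu q)
        ≤ ENNReal.ofReal ε' * eLpNorm (⇑φ) 2 (mu q) := by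
      refine eLpNorm_le_mul_eLpNorm_of_ae_le_mul ?_ 2
      filter_upwards [h.coeFn_toLp, hP.coeFn_toLp, mu_ae_le_one q hq1] with ζ h1 h2 h3
      rw [Pi.sub_apply, h1, h2]
      have : f ζ * φ ζ - P ζ * φ ζ = (f ζ - P ζ) * φ ζ := by ring
      rw [this, norm_mul]
      apply mul_le_mul_of_nonneg_right ?_ (norm_nonneg _)
      exact hc ζ (by simpa [mem_closedBall, dist_zero_right] using h3)
    calc (eLpNorm (⇑(h.toLp _) - ⇑(hP.toLp _)) 2 (mu q)).toReal
        ≤ (ENNReal.ofReal ε' * eLpNorm (⇑φ) 2 (mu q)).toReal := by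
          refine ENNReal.toReal_mono ?_ hdist
          exact ENNReal.mul_ne_top ENNReal.ofReal_ne_top (Lp.eLpNorm_ne_top φ)
      _ = ε' * ‖φ‖ := by
          rw [ENNReal.toReal_mul, ENNReal.toReal_ofReal hε'.le, Lp.norm_def]
      _ < ε' * (‖φ‖ + 1) := by
          apply mul_lt_mul_of_pos_left (lt_add_one _) hε'
      _ = ε := div_mul_cancel₀ ε hφ1.ne'
  rwa [hclosed.closure_eq] at hmem

/-- For `f` continuous on the closed disk and holomorphic inside, multiplication by `f`
preserves `H²` (so `T(f)φ = f·φ`), and `T(f)` commutes with `T(ζ)`. -/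
theorem stmt14 (q : ℝ) (hq0 : 0 < q) (hq1 : q < 1)
    (T : (ℂ → ℂ) → (Hsq q →L[ℂ] Hsq q))
    (hT : ∀ g : ℂ → ℂ, ContinuousOn g (closedBall 0 1) → ∀ φ ψ : Hsq q,
      (inner ℂ (ψ : Lp ℂ 2 (mu q)) ((T g φ : Lp ℂ 2 (mu q))) : ℂ)
        = ∫ ζ, (starRingEnd ℂ) ((ψ : Lp ℂ 2 (mu q)) ζ) * g ζ * (φ : Lp ℂ 2 (mu q)) ζ
            ∂(mu q))
    (f : ℂ → ℂ)
    (hfc : ContinuousOn f (closedBall 0 1))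
    (hfh : DifferentiableOn ℂ f (ball 0 1)) :
    (∀ φ : Hsq q, ((T f φ : Lp ℂ 2 (mu q)) : ℂ → ℂ)
        =ᵐ[mu q] fun ζ => f ζ * (φ : Lp ℂ 2 (mu q)) ζ) ∧
    (T f).comp (T fun ζ => ζ) = (T fun ζ => ζ).comp (T f) := by
  have key : ∀ g : ℂ → ℂ, ContinuousOn g (closedBall 0 1) → DifferentiableOn ℂ g (ball 0 1) →
      ∀ φ : Hsq q, ((T g φ : Lp ℂ 2 (mu q)) : ℂ → ℂ)
        =ᵐ[mu q] fun ζ => g ζ * (φ : Lp ℂ 2 (mu q)) ζ := by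
    intro g hgc hgh φ
    -- measurability of g w.r.t. mu q
    have hrestrict : (mu q).restrict (closedBall 0 1) = mu q := by
      apply Measure.restrict_eq_self_of_ae_mem
      filter_upwards [mu_ae_le_one q hq1.le] with ζ h
      simpa [mem_closedBall, dist_zero_right] using h
    have hgm : AEStronglyMeasurable g (mu q) := by
      have := ContinuousOn.aestronglyMeasurable (μ := mu q) hgc measurableSet_closedBall
      rwa [hrestrict] at this
    -- boundedness of g
    obtain ⟨C, hC⟩ := (isCompact_closedBall (0:ℂ) 1).exists_bound_of_continuousOn hgc
    have hgb : ∀ᵐ ζ ∂(mu q), ‖g ζ‖ ≤ max C 0 := by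
      filter_upwards [mu_ae_le_one q hq1.le] with ζ h
      exact le_max_of_le_left (hC ζ (by simpa [mem_closedBall, dist_zero_right] using h))
    have h : MemLp (fun ζ => g ζ * (φ : Lp ℂ 2 (mu q)) ζ) 2 (mu q) :=
      memLp_mul g hgm _ hgb _
    set v : Lp ℂ 2 (mu q) := h.toLp _ with hvdef
    have hv : v ∈ Hsq q := f_mul_mem q hq1.le g hgc hgh _ φ.2 h
    set u : Lp ℂ 2 (mu q) := (T g φ : Lp ℂ 2 (mu q)) with hudef
    have hu : u ∈ Hsq q := (T g φ).2
    have hd : u - v ∈ Hsq q := sub_mem hu hv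
    set ψ : Hsq q := ⟨u - v, hd⟩ with hψdef
    have h1 := hT g hgc φ ψ
    have h2 : (inner ℂ ((ψ : Lp ℂ 2 (mu q))) v : ℂ)
        = ∫ ζ, (starRingEnd ℂ) ((ψ : Lp ℂ 2 (mu q)) ζ) * g ζ * (φ : Lp ℂ 2 (mu q)) ζ
            ∂(mu q) := by
      rw [L2.inner_def]
      apply integral_congr_ae
      filter_upwards [h.coeFn_toLp] with ζ hζ
      rw [RCLike.inner_apply, hζ]
      ring
    have hzero : (inner ℂ ((ψ : Lp ℂ 2 (mu q))) (u - v) : ℂ) = 0 := by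
      rw [inner_sub_right, h1, h2, sub_self]
    have : u - v = 0 := by
      have := inner_self_eq_zero.mp hzero
      exact this
    have huv : u = v := by
      rwa [sub_eq_zero] at this
    calc (u : ℂ → ℂ) = (v : ℂ → ℂ) := by rw [huv]
      _ =ᵐ[mu q] fun ζ => g ζ * (φ : Lp ℂ 2 (mu q)) ζ := h.coeFn_toLp
  have hidc : ContinuousOn (fun ζ : ℂ => ζ) (closedBall 0 1) := continuousOn_id
  have hidh : DifferentiableOn ℂ (fun ζ : ℂ => ζ) (ball 0 1) := differentiableOn_id
  refine ⟨key f hfc hfh, ?_⟩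
  apply ContinuousLinearMap.ext
  intro φ
  apply Subtype.ext
  apply Lp.ext
  show ((T f ((T fun ζ => ζ) φ) : Lp ℂ 2 (mu q)) : ℂ → ℂ)
      =ᵐ[mu q] ((T (fun ζ => ζ) (T f φ) : Lp ℂ 2 (mu q)) : ℂ → ℂ)
  filter_upwards [key f hfc hfh ((T fun ζ => ζ) φ), key (fun ζ => ζ) hidc hidh φ,
    key (fun ζ => ζ) hidc hidh (T f φ), key f hfc hfh φ] with ζ h1 h2 h3 h4
  rw [h1, h3, h2, h4]
  ring

end
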